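/- Let N ≥ 1 be an integer and ρ1, ρ2, ρ12, λ real numbers. Then det(Q(N,ρ1,ρ2,ρ12) − λ·I_{2N}) = ((1−λ+(N−1)ρ1)·(1−λ+(N−1)ρ2) − N²ρ12²) · ((1−λ−ρ1)·(1−λ−ρ2))^{N−1}. -/

import Mathlib

open Matrix

noncomputable section

/-- The all-ones matrix. -/
def J (a b : ℕ) : Matrix (Fin a) (Fin b) ℝ := Matrix.of fun _ _ => 1

/-- The structured correlation matrix of the symmetric 2-layer N-relay Gaussian network. -/
def Q (N : ℕ) (ρ1 ρ2 ρ12 : ℝ) : Matrix (Fin N ⊕ Fin N) (Fin N ⊕ Fin N) ℝ :=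
  Matrix.fromBlocks (ρ1 • J N N + (1 - ρ1) • 1) (ρ12 • J N N)
    (ρ12 • J N N) (ρ2 • J N N + (1 - ρ2) • 1)

theorem stmt_0 (N : ℕ) (hN : 1 ≤ N) (ρ1 ρ2 ρ12 lam : ℝ) :
    (Q N ρ1 ρ2 ρ12 - lam • 1).det
      = ((1 - lam + ((N : ℝ) - 1) * ρ1) * (1 - lam + ((N : ℝ) - 1) * ρ2)
          - (N : ℝ) ^ 2 * ρ12 ^ 2)
        * ((1 - lam - ρ1) * (1 - lam - ρ2)) ^ (N - 1) := by
  set a : ℝ := 1 - lam - ρ1 with ha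
  set b : ℝ := 1 - lam - ρ2 with hb
  set d : Fin N ⊕ Fin N → ℝ := Sum.elim (fun _ => a) (fun _ => b) with hd
  set X : Matrix (Fin N ⊕ Fin N) (Fin 2) ℝ :=
    Matrix.of (Sum.elim (fun _ : Fin N => ![ρ1, ρ12]) (fun _ : Fin N => ![ρ12, ρ2])) with hX
  set Y : Matrix (Fin 2) (Fin N ⊕ Fin N) ℝ :=
    Matrix.of ![Sum.elim (fun _ : Fin N => (1:ℝ)) (fun _ => 0),
                Sum.elim (fun _ : Fin N => (0:ℝ)) (fun _ => 1)] with hY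
  have hM : Q N ρ1 ρ2 ρ12 - lam • 1 = Matrix.diagonal d + X * Y := by
    ext i j
    rcases i with i | i <;> rcases j with j | j <;>
      simp [Q, _root_.J, hX, hY, hd, Matrix.mul_apply, Fin.sum_univ_two, Matrix.one_apply,
        Matrix.diagonal, Matrix.fromBlocks] <;>
      by_cases h : i = j <;> simp [h, ha, hb] <;> ring
  rw [hM]
  rcases eq_or_ne N 1 with h1 | h1
  · -- N = 1 : direct 2×2 computation
    subst h1
    rw [← Matrix.det_submatrix_equiv_self
      (⟨![Sum.inl 0, Sum.inr 0], Sum.elim (fun _ => 0) (fun _ => 1), by decide, by decide⟩ :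
        Fin 2 ≃ Fin 1 ⊕ Fin 1) (Matrix.diagonal d + X * Y)]
    rw [Matrix.det_fin_two]
    simp [hX, hY, hd, Matrix.mul_apply, Fin.sum_univ_two, Matrix.diagonal, finSumFinEquiv,
      Matrix.submatrix]
    ring
  · have hN2 : 2 ≤ N := by omega
    rcases eq_or_ne a 0 with haz | haz
    · -- repeated rows in first block
      have hrow : (Matrix.diagonal d + X * Y) (Sum.inl ⟨0, by omega⟩)
          = (Matrix.diagonal d + X * Y) (Sum.inl ⟨1, by omega⟩) := by
        funext j
        rcases j with j | j <;>
          simp [hX, hY, hd, Matrix.mul_apply, Fin.sum_univ_two, Matrix.diagonal,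
            Matrix.one_apply, haz] <;>
          split_ifs <;> simp [haz]
      rw [Matrix.det_zero_of_row_eq (by simp [Fin.ext_iff]) hrow, haz]
      rw [zero_mul, zero_pow (by omega), mul_zero]
    rcases eq_or_ne b 0 with hbz | hbz
    · have hrow : (Matrix.diagonal d + X * Y) (Sum.inr ⟨0, by omega⟩)
          = (Matrix.diagonal d + X * Y) (Sum.inr ⟨1, by omega⟩) := by
        funext j
        rcases j with j | j <;>
          simp [hX, hY, hd, Matrix.mul_apply, Fin.sum_univ_two, Matrix.diagonal,
            Matrix.one_apply, hbz] <;>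
          split_ifs <;> simp [hbz]
      rw [Matrix.det_zero_of_row_eq (by simp [Fin.ext_iff]) hrow, hbz]
      rw [mul_zero, zero_pow (by omega), mul_zero]
    · -- generic case
      have hdet : (Matrix.diagonal d).det = a ^ N * b ^ N := by
        rw [Matrix.det_diagonal, Fintype.prod_sum_type]
        simp [hd]
      have hunit : IsUnit (Matrix.diagonal d).det := by
        rw [hdet]; exact ((isUnit_iff_ne_zero.2 (pow_ne_zero _ haz)).mul
          (isUnit_iff_ne_zero.2 (pow_ne_zero _ hbz)))
      rw [Matrix.det_add_mul X Y hunit, hdet]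
      have hinv : (Matrix.diagonal d)⁻¹ = Matrix.diagonal (fun i => (d i)⁻¹) := by
        apply Matrix.inv_eq_right_inv
        rw [Matrix.diagonal_mul_diagonal]
        have hfun : (fun i => d i * (d i)⁻¹) = fun _ => (1 : ℝ) := by
          funext i
          rcases i with i | i
          · exact mul_inv_cancel₀ haz
          · exact mul_inv_cancel₀ hbz
        rw [hfun, Matrix.diagonal_one]
      obtain ⟨n, rfl⟩ : ∃ n, N = n + 1 := ⟨N - 1, by omega⟩
      have hW : Y * (Matrix.diagonal fun i => (d i)⁻¹)
          = Matrix.of ![Sum.elim (fun _ : Fin (n+1) => a⁻¹) (fun _ => 0),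
              Sum.elim (fun _ : Fin (n+1) => (0:ℝ)) (fun _ => b⁻¹)] := by
        ext i j
        rcases j with j | j <;> fin_cases i <;> simp [Matrix.mul_diagonal, hY, hd]
      have hof : ∀ (M : Matrix (Fin 2) (Fin 2) ℝ) i j, Matrix.of M i j = M i j := fun _ _ _ => rfl
      have hZ : Y * (Matrix.diagonal fun i => (d i)⁻¹) * X
          = Matrix.of !![((n:ℝ)+1) * ρ1 * a⁻¹, ((n:ℝ)+1) * ρ12 * a⁻¹;
              ((n:ℝ)+1) * ρ12 * b⁻¹, ((n:ℝ)+1) * ρ2 * b⁻¹] := by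
        rw [hW]
        ext i j
        fin_cases i <;> fin_cases j <;>
          simp [Matrix.mul_apply, Fintype.sum_sum_type, hX, Finset.sum_const, mul_comm, hof] <;>
          ring
      rw [hinv, hZ, Matrix.det_fin_two]
      simp only [hof, Matrix.add_apply, Matrix.one_apply, Matrix.of_apply, Matrix.cons_val_zero,
        Matrix.cons_val_one, Matrix.head_cons, Matrix.head_fin_const, if_true, if_pos rfl]
      norm_num
      rw [show (1 - lam + (n:ℝ) * ρ1) = a + ((n:ℝ) + 1) * ρ1 by rw [ha]; ring,
        show (1 - lam + (n:ℝ) * ρ2) = b + ((n:ℝ) + 1) * ρ2 by rw [hb]; ring,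
        pow_succ, pow_succ, mul_pow]
      field_simp
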